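/- Let 𝒥 be a finite set, K ∈ ℕ, and for each t ∈ {1,…,K} let p_{t,·} : 𝒥 → ℝ ∪ {∞} assign sizes. Let x : 𝒥 × {1,…,K} → [0,1] satisfy ∑_{t} x_{j,t} = 1 for every j ∈ 𝒥 and x_{j,t} = 0 whenever p_{t,j} = ∞. Then there exists a map τ : 𝒥 → {1,…,K} with x_{j,τ(j)} > 0 for every j, such that for every type t and every value v, |{j ∈ 𝒥 : τ(j) = t and p_{t,j} = v}| ≤ ⌈∑_{j : p_{t,j} = v} x_{j,t}⌉. -/

import Mathlib

open Finset
open scoped Classical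

/-- Rounding the fractional job-assignment variables via flow
integrality: each job is assigned to a type it is fractionally assigned to, and for each
type and value the number of assigned jobs of that value is at most the rounded-up
fractional number. -/
theorem fractional_assignment_rounding {J : Type*} [Fintype J] (K : ℕ)
    (p : Fin K → J → WithTop ℝ)
    (x : J → Fin K → ℝ)
    (hx0 : ∀ j t, 0 ≤ x j t) (hx1 : ∀ j t, x j t ≤ 1)
    (hsum : ∀ j, ∑ t, x j t = 1)
    (hinf : ∀ j t, p t j = ⊤ → x j t = 0) :
    ∃ τ : J → Fin K, (∀ j, 0 < x j (τ j)) ∧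
      ∀ (t : Fin K) (v : WithTop ℝ),
        (((univ.filter fun j => τ j = t ∧ p t j = v).card : ℤ)) ≤
          ⌈∑ j ∈ univ.filter (fun j => p t j = v), x j t⌉ := by
  classical
  set S : Fin K → WithTop ℝ → ℝ :=
    fun t v => ∑ j ∈ univ.filter (fun j => p t j = v), x j t with hSdef
  have hS0 : ∀ t v, 0 ≤ S t v := fun t v => Finset.sum_nonneg fun j _ => hx0 j t
  set n : Fin K → WithTop ℝ → ℕ := fun t v => (⌈S t v⌉).toNat with hndef
  have hnceil : ∀ t v, (n t v : ℤ) = ⌈S t v⌉ := fun t v =>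
    Int.toNat_of_nonneg (Int.ceil_nonneg (hS0 t v))
  have hnS : ∀ t v, S t v ≤ (n t v : ℝ) := by
    intro t v
    have h1 : S t v ≤ (⌈S t v⌉ : ℝ) := Int.le_ceil _
    have h2 : ((⌈S t v⌉ : ℤ) : ℝ) = ((n t v : ℤ) : ℝ) := by rw [hnceil]
    rw [h2] at h1
    exact_mod_cast h1
  set T : J → Finset (Fin K × WithTop ℝ × ℕ) := fun j =>
    (univ.filter fun t => 0 < x j t).biUnion
      (fun t => (Finset.range (n t (p t j))).image fun i => (t, p t j, i)) with hTdef
  have hall : ∀ s : Finset J, s.card ≤ (s.biUnion T).card := by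
    intro s
    set C : Finset (Fin K × WithTop ℝ) :=
      s.biUnion (fun j => (univ.filter fun t => 0 < x j t).image (fun t => (t, p t j)))
      with hCdef
    have hUnion : s.biUnion T =
        C.biUnion (fun c => (Finset.range (n c.1 c.2)).image fun i => (c.1, c.2, i)) := by
      ext a
      simp only [hTdef, hCdef, Finset.mem_biUnion, Finset.mem_image, Finset.mem_filter,
        Finset.mem_univ, true_and, Finset.mem_range]
      constructor
      · rintro ⟨j, hj, t, ht, i, hi, rfl⟩
        exact ⟨(t, p t j), ⟨j, hj, t, ht, rfl⟩, i, hi, rfl⟩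
      · rintro ⟨c, ⟨j, hj, t, ht, rfl⟩, i, hi, rfl⟩
        exact ⟨j, hj, t, ht, i, hi, rfl⟩
    have hcardUnion : (s.biUnion T).card = ∑ c ∈ C, n c.1 c.2 := by
      rw [hUnion, Finset.card_biUnion]
      · refine Finset.sum_congr rfl fun c _ => ?_
        rw [Finset.card_image_of_injective _
            (fun i i' h => by simpa using h), Finset.card_range]
      · intro c hc c' hc' hne
        simp only [Finset.disjoint_left, Finset.mem_image, Finset.mem_range]
        rintro a ⟨i, hi, rfl⟩ ⟨i', hi', h⟩
        apply hne
        have h1 : c'.1 = c.1 := congrArg (fun z => z.1) h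
        have h2 : c'.2 = c.2 := congrArg (fun z => z.2.1) h
        exact Prod.ext h1.symm h2.symm
    -- per-job class set lemma
    have hclass : ∀ j ∈ s,
        C.filter (fun c => p c.1 j = c.2 ∧ 0 < x j c.1)
          = (univ.filter fun t => 0 < x j t).image (fun t => (t, p t j)) := by
      intro j hj
      ext c
      simp only [Finset.mem_filter, Finset.mem_image, Finset.mem_univ, true_and, hCdef,
        Finset.mem_biUnion]
      constructor
      · rintro ⟨-, hpc, hxc⟩
        exact ⟨c.1, hxc, by rw [hpc]⟩
      · rintro ⟨t, ht, rfl⟩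
        exact ⟨⟨j, hj, t, ht, rfl⟩, rfl, ht⟩
    have key : (s.card : ℝ) ≤ ∑ c ∈ C, S c.1 c.2 := by
      have step1 : (s.card : ℝ) = ∑ j ∈ s, ∑ t, x j t := by
        rw [Finset.sum_congr rfl (fun j _ => hsum j)]
        simp
      have step2 : ∀ j ∈ s, ∑ t, x j t = ∑ t ∈ univ.filter (fun t => 0 < x j t), x j t := by
        intro j _
        rw [Finset.sum_filter_of_ne]
        intro t _ hne
        exact lt_of_le_of_ne (hx0 j t) (Ne.symm hne)
      have step3 : ∀ j ∈ s,
          ∑ t ∈ univ.filter (fun t => 0 < x j t), x j t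
            = ∑ c ∈ C.filter (fun c => p c.1 j = c.2 ∧ 0 < x j c.1), x j c.1 := by
        intro j hj
        rw [hclass j hj, Finset.sum_image]
        intro t _ t' _ h
        exact congrArg Prod.fst h
      have swap : ∑ j ∈ s, ∑ c ∈ C.filter (fun c => p c.1 j = c.2 ∧ 0 < x j c.1), x j c.1
          = ∑ c ∈ C, ∑ j ∈ s.filter (fun j => p c.1 j = c.2 ∧ 0 < x j c.1), x j c.1 := by
        apply Finset.sum_comm'
        intro j c
        simp only [Finset.mem_filter]
        tauto
      have last : ∀ c ∈ C,
          ∑ j ∈ s.filter (fun j => p c.1 j = c.2 ∧ 0 < x j c.1), x j c.1 ≤ S c.1 c.2 := by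
        intro c _
        apply Finset.sum_le_sum_of_subset_of_nonneg
        · intro j hj
          simp only [Finset.mem_filter, Finset.mem_univ, true_and] at hj ⊢
          exact hj.2.1
        · intro j _ _
          exact hx0 j c.1
      calc (s.card : ℝ) = ∑ j ∈ s, ∑ t, x j t := step1
        _ = ∑ j ∈ s, ∑ c ∈ C.filter (fun c => p c.1 j = c.2 ∧ 0 < x j c.1), x j c.1 :=
            Finset.sum_congr rfl (fun j hj => (step2 j hj).trans (step3 j hj))
        _ = ∑ c ∈ C, ∑ j ∈ s.filter (fun j => p c.1 j = c.2 ∧ 0 < x j c.1), x j c.1 := swap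
        _ ≤ ∑ c ∈ C, S c.1 c.2 := Finset.sum_le_sum last
    have final : (s.card : ℝ) ≤ ((s.biUnion T).card : ℝ) := by
      calc (s.card : ℝ) ≤ ∑ c ∈ C, S c.1 c.2 := key
        _ ≤ ∑ c ∈ C, (n c.1 c.2 : ℝ) := Finset.sum_le_sum (fun c _ => hnS c.1 c.2)
        _ = ((∑ c ∈ C, n c.1 c.2 : ℕ) : ℝ) := by push_cast; ring
        _ = ((s.biUnion T).card : ℝ) := by rw [hcardUnion]
    exact_mod_cast final
  obtain ⟨f, hfinj, hfT⟩ := (Finset.all_card_le_biUnion_card_iff_exists_injective T).mp hall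
  have hfj : ∀ j, 0 < x j (f j).1 ∧ (f j).2.1 = p (f j).1 j ∧
      (f j).2.2 < n (f j).1 (p (f j).1 j) := by
    intro j
    have := hfT j
    simp only [hTdef, Finset.mem_biUnion, Finset.mem_image, Finset.mem_filter,
      Finset.mem_univ, true_and, Finset.mem_range] at this
    obtain ⟨t, ht, i, hi, hteq⟩ := this
    rw [← hteq]
    exact ⟨ht, rfl, hi⟩
  refine ⟨fun j => (f j).1, fun j => (hfj j).1, ?_⟩
  intro t v
  have hcard : (univ.filter fun j => (f j).1 = t ∧ p t j = v).card ≤ n t v := by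
    have := Finset.card_le_card_of_injOn (fun j => (f j).2.2)
      (s := univ.filter fun j => (f j).1 = t ∧ p t j = v)
      (t := Finset.range (n t v)) ?_ ?_
    · simpa using this
    · intro j hj
      simp only [Finset.mem_coe, Finset.mem_filter] at hj
      obtain ⟨-, hjt, hjv⟩ := hj
      have h := (hfj j).2.2
      rw [hjt, hjv] at h
      exact Finset.mem_range.mpr h
    · intro j hj j' hj' heq
      simp only [Finset.coe_filter, Set.mem_setOf_eq] at hj hj'
      apply hfinj
      have h1 : (f j).2.1 = v := by
        have := (hfj j).2.1; rw [hj.2.1, hj.2.2] at this; exact this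
      have h1' : (f j').2.1 = v := by
        have := (hfj j').2.1; rw [hj'.2.1, hj'.2.2] at this; exact this
      exact Prod.ext (hj.2.1.trans hj'.2.1.symm)
        (Prod.ext (h1.trans h1'.symm) heq)
  have : ((univ.filter fun j => (f j).1 = t ∧ p t j = v).card : ℤ) ≤ (n t v : ℤ) := by
    exact_mod_cast hcard
  rw [hnceil t v] at this
  exact this
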